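/- arXiv:2504.09204 — 3 statements merged into one kernel-verified Lean document; each statement's English description precedes it below -/
import Mathlib

section
/- Let m ≥ 2 be an integer. Every positive root of C_n whose height is divisible by m can be written as a sum of roots of height exactly m; that is, R⁺(m) is contained in the additive submonoid of ℝ^n generated by R_m. -/
noncomputable section

/-- The standard basis vector `ε_{i+1}` of `ℝ^n` (0-based index `i`). -/
def eps (n : ℕ) (i : Fin n) : Fin n → ℝ := fun j => if j = i then 1 else 0

/-- The root system of type `Cₙ`. -/
def Croots (n : ℕ) : Set (Fin n → ℝ) :=
  {v | (∃ i j : Fin n, i < j ∧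
         (v = eps n j - eps n i ∨ v = -(eps n j - eps n i) ∨
          v = eps n j + eps n i ∨ v = -(eps n j + eps n i))) ∨
       (∃ i : Fin n, v = (2 : ℝ) • eps n i ∨ v = -((2 : ℝ) • eps n i))}

/-- The height functional for type `Cₙ`. -/
def htC (n : ℕ) (v : Fin n → ℝ) : ℝ := ∑ i : Fin n, v i * ((i : ℝ) + 1 / 2)

lemma htC_eps (n : ℕ) (i : Fin n) : htC n (eps n i) = (i : ℝ) + 1 / 2 := by
  unfold htC eps
  rw [Finset.sum_eq_single i]
  · simp
  · intro b _ hb; simp [hb]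
  · simp

lemma htC_add (n : ℕ) (u v : Fin n → ℝ) : htC n (u + v) = htC n u + htC n v := by
  simp [htC, add_mul, Finset.sum_add_distrib]

lemma htC_neg (n : ℕ) (u : Fin n → ℝ) : htC n (-u) = -htC n u := by
  simp [htC]

lemma htC_sub (n : ℕ) (u v : Fin n → ℝ) : htC n (u - v) = htC n u - htC n v := by
  rw [sub_eq_add_neg, htC_add, htC_neg, sub_eq_add_neg]

lemma htC_sub_eps (n : ℕ) (i j : Fin n) :
    htC n (eps n j - eps n i) = (j : ℝ) - i := by
  rw [htC_sub, htC_eps, htC_eps]; ring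

lemma htC_add_eps (n : ℕ) (i j : Fin n) :
    htC n (eps n j + eps n i) = (i : ℝ) + j + 1 := by
  rw [htC_add, htC_eps, htC_eps]; ring

lemma htC_two_eps (n : ℕ) (i : Fin n) :
    htC n ((2 : ℝ) • eps n i) = 2 * i + 1 := by
  rw [two_smul, htC_add, htC_eps]; ring

lemma gen_sub (n m : ℕ) (i j : Fin n) (hij : (i : ℕ) < (j : ℕ)) (h : (j : ℕ) = m + i) :
    eps n j - eps n i ∈ {u ∈ Croots n | htC n u = (m : ℝ)} := by
  constructor
  · exact Or.inl ⟨i, j, Fin.lt_def.mpr hij, Or.inl rfl⟩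
  · rw [htC_sub_eps]
    have : ((j : ℕ) : ℝ) = (m : ℝ) + (i : ℕ) := by exact_mod_cast congrArg (Nat.cast : ℕ → ℝ) h
    linarith

lemma gen_add (n m : ℕ) (i j : Fin n) (hij : (i : ℕ) < (j : ℕ)) (h : (i : ℕ) + j + 1 = m) :
    eps n j + eps n i ∈ {u ∈ Croots n | htC n u = (m : ℝ)} := by
  constructor
  · exact Or.inl ⟨i, j, Fin.lt_def.mpr hij, Or.inr (Or.inr (Or.inl rfl))⟩
  · rw [htC_add_eps]
    have : ((i : ℕ) : ℝ) + ((j : ℕ) : ℝ) + 1 = (m : ℝ) := by exact_mod_cast congrArg (Nat.cast : ℕ → ℝ) h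
    linarith

lemma gen_two (n m : ℕ) (i : Fin n) (h : 2 * (i : ℕ) + 1 = m) :
    (2 : ℝ) • eps n i ∈ {u ∈ Croots n | htC n u = (m : ℝ)} := by
  constructor
  · exact Or.inr ⟨i, Or.inl rfl⟩
  · rw [htC_two_eps]
    have : 2 * ((i : ℕ) : ℝ) + 1 = (m : ℝ) := by exact_mod_cast congrArg (Nat.cast : ℕ → ℝ) h
    linarith

lemma key (n m : ℕ) (hm : 2 ≤ m) :
    ∀ k : ℕ, 1 ≤ k →
      (∀ i j : Fin n, (i : ℕ) < (j : ℕ) → (j : ℕ) = k * m + (i : ℕ) →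
        eps n j - eps n i ∈ AddSubmonoid.closure {u ∈ Croots n | htC n u = (m : ℝ)}) ∧
      (∀ i j : Fin n, (i : ℕ) < (j : ℕ) → (i : ℕ) + (j : ℕ) + 1 = k * m →
        eps n j + eps n i ∈ AddSubmonoid.closure {u ∈ Croots n | htC n u = (m : ℝ)}) ∧
      (∀ i : Fin n, 2 * (i : ℕ) + 1 = k * m →
        (2 : ℝ) • eps n i ∈ AddSubmonoid.closure {u ∈ Croots n | htC n u = (m : ℝ)}) := by
  intro k
  induction k using Nat.strong_induction_on with
  | _ k ih =>
  intro hk1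
  have hsub : (k - 1) * m + m = k * m := by
    have h1 : k - 1 + 1 = k := Nat.succ_pred_eq_of_pos hk1
    calc (k - 1) * m + m = (k - 1 + 1) * m := by rw [Nat.succ_mul]
    _ = k * m := by rw [h1]
  rcases eq_or_lt_of_le hk1 with hk | hk2
  · -- k = 1
    subst hk
    refine ⟨?_, ?_, ?_⟩
    · intro i j hij hj
      exact AddSubmonoid.subset_closure (gen_sub n m i j hij (by omega))
    · intro i j hij hj
      exact AddSubmonoid.subset_closure (gen_add n m i j hij (by omega))
    · intro i hj
      exact AddSubmonoid.subset_closure (gen_two n m i (by omega))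
  · -- 2 ≤ k
    have h2m : 2 * m ≤ k * m := Nat.mul_le_mul hk2 (le_refl m)
    have ihm := ih (k - 1) (by omega) (by omega)
    refine ⟨?_, ?_, ?_⟩
    · intro i j hij hj
      set a : Fin n := ⟨(j : ℕ) - m, lt_of_le_of_lt (Nat.sub_le _ _) j.isLt⟩ with ha
      have hav : (a : ℕ) = (j : ℕ) - m := rfl
      have hdec : eps n j - eps n i = (eps n j - eps n a) + (eps n a - eps n i) := by abel
      rw [hdec]
      refine AddSubmonoid.add_mem _ (AddSubmonoid.subset_closure (gen_sub n m a j (by omega) (by omega))) ?_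
      exact ihm.1 i a (by omega) (by omega)
    · intro i j hij hj
      have hjm : m ≤ (j : ℕ) := by omega
      set a : Fin n := ⟨(j : ℕ) - m, lt_of_le_of_lt (Nat.sub_le _ _) j.isLt⟩ with ha
      have hav : (a : ℕ) = (j : ℕ) - m := rfl
      have hdec : eps n j + eps n i = (eps n j - eps n a) + (eps n a + eps n i) := by abel
      rw [hdec]
      refine AddSubmonoid.add_mem _ (AddSubmonoid.subset_closure (gen_sub n m a j (by omega) (by omega))) ?_
      rcases Nat.lt_trichotomy (a : ℕ) (i : ℕ) with h | h | h
      · have := ihm.2.1 a i h (by omega)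
        rwa [add_comm] at this
      · have hai : a = i := Fin.ext h
        rw [hai, ← two_smul ℝ (eps n i)]
        exact ihm.2.2 i (by omega)
      · exact ihm.2.1 i a h (by omega)
    · intro i hi
      have him : m ≤ (i : ℕ) := by omega
      set a : Fin n := ⟨(i : ℕ) - m, lt_of_le_of_lt (Nat.sub_le _ _) i.isLt⟩ with ha
      have hav : (a : ℕ) = (i : ℕ) - m := rfl
      have hdec : (2 : ℝ) • eps n i = (eps n i - eps n a) + (eps n i + eps n a) := by
        rw [two_smul]; abel
      rw [hdec]
      refine AddSubmonoid.add_mem _ (AddSubmonoid.subset_closure (gen_sub n m a i (by omega) (by omega))) ?_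
      exact ihm.2.1 a i (by omega) (by omega)

lemma extract (m c : ℕ) (hm : 0 < m) (hc : 0 < c) (l : ℤ) (h : (c : ℝ) = (m : ℝ) * l) :
    ∃ k : ℕ, 1 ≤ k ∧ c = k * m := by
  have h' : (c : ℤ) = (m : ℤ) * l := by exact_mod_cast h
  have hl : 0 < l := by
    rcases le_or_gt l 0 with h0 | h0
    · exfalso
      have : (m : ℤ) * l ≤ 0 := mul_nonpos_of_nonneg_of_nonpos (by positivity) h0
      omega
    · exact h0
  refine ⟨l.toNat, by omega, ?_⟩
  have hl2 : (l.toNat : ℤ) = l := Int.toNat_of_nonneg hl.le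
  have hc2 : (c : ℤ) = ((l.toNat * m : ℕ) : ℤ) := by
    push_cast
    rw [hl2]
    linarith [h', mul_comm (m : ℤ) l]
  exact_mod_cast hc2

/-- for `m ≥ 2`, every positive root of `Cₙ` whose height is divisible
by `m` lies in the additive submonoid of `ℝ^n` generated by the set `R_m` of roots
of height exactly `m`. -/
theorem stmt3 (n : ℕ) (hn : 2 ≤ n) (m : ℕ) (hm : 2 ≤ m) :
    ∀ v ∈ Croots n, 0 < htC n v → (∃ l : ℤ, htC n v = (m : ℝ) * l) →
      v ∈ AddSubmonoid.closure {u ∈ Croots n | htC n u = (m : ℝ)} := by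
  rintro v hv hpos ⟨l, hl⟩
  rcases hv with ⟨i, j, hij, hform⟩ | ⟨i, hform⟩
  · have hijn : (i : ℕ) < (j : ℕ) := Fin.lt_def.mp hij
    have hijr : ((i : ℕ) : ℝ) < ((j : ℕ) : ℝ) := by exact_mod_cast hijn
    rcases hform with h | h | h | h
    · subst h
      rw [htC_sub_eps] at hl
      have hc : (((j : ℕ) - (i : ℕ) : ℕ) : ℝ) = (m : ℝ) * l := by
        rw [Nat.cast_sub hijn.le]; exact hl
      obtain ⟨k, hk1, hk2⟩ := extract m ((j : ℕ) - (i : ℕ)) (by omega) (by omega) l hc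
      exact (key n m hm k hk1).1 i j hijn (by omega)
    · exfalso
      rw [h, htC_neg, htC_sub_eps] at hpos
      linarith
    · subst h
      rw [htC_add_eps] at hl
      have hc : (((i : ℕ) + (j : ℕ) + 1 : ℕ) : ℝ) = (m : ℝ) * l := by
        push_cast; linarith
      obtain ⟨k, hk1, hk2⟩ := extract m ((i : ℕ) + (j : ℕ) + 1) (by omega) (by omega) l hc
      exact (key n m hm k hk1).2.1 i j hijn (by omega)
    · exfalso
      rw [h, htC_neg, htC_add_eps] at hpos
      have : (0 : ℝ) ≤ ((i : ℕ) : ℝ) := by positivity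
      linarith
  · rcases hform with h | h
    · subst h
      rw [htC_two_eps] at hl
      have hc : ((2 * (i : ℕ) + 1 : ℕ) : ℝ) = (m : ℝ) * l := by
        push_cast; linarith
      obtain ⟨k, hk1, hk2⟩ := extract m (2 * (i : ℕ) + 1) (by omega) (by omega) l hc
      exact (key n m hm k hk1).2.2 i (by omega)
    · exfalso
      rw [h, htC_neg, htC_two_eps] at hpos
      have : (0 : ℝ) ≤ ((i : ℕ) : ℝ) := by positivity
      linarith
end
end

section
/- Let n ≥ 3 and let m ≥ 2 be an integer such that m is odd or 3m > 2n (i.e. m is not of the form 2k with 3k ≤ n). Then every positive root of B_n whose height is divisible by m can be written as a sum of roots of height exactly m. -/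
noncomputable section

/-- The root system of type `Bₙ`. -/
def Broots (n : ℕ) : Set (Fin n → ℝ) :=
  {v | (∃ i : Fin n, v = eps n i ∨ v = -eps n i) ∨
       (∃ i j : Fin n, i < j ∧
         (v = eps n j - eps n i ∨ v = -(eps n j - eps n i) ∨
          v = eps n j + eps n i ∨ v = -(eps n j + eps n i)))}

/-- The height functional for type `Bₙ`. -/
def htB (n : ℕ) (v : Fin n → ℝ) : ℝ := ∑ i : Fin n, v i * ((i : ℝ) + 1)

lemma htB_eps (n : ℕ) (i : Fin n) : htB n (eps n i) = (i : ℝ) + 1 := by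
  simp [htB, eps, Finset.sum_ite_eq']

lemma htB_neg (n : ℕ) (v : Fin n → ℝ) : htB n (-v) = -htB n v := by
  simp [htB, Finset.sum_neg_distrib]

lemma htB_sub (n : ℕ) (u v : Fin n → ℝ) : htB n (u - v) = htB n u - htB n v := by
  simp [htB, sub_mul, Finset.sum_sub_distrib]

lemma htB_add (n : ℕ) (u v : Fin n → ℝ) : htB n (u + v) = htB n u + htB n v := by
  simp [htB, add_mul, Finset.sum_add_distrib]

lemma eps_mem_Broots (n : ℕ) (i : Fin n) : eps n i ∈ Broots n := by
  exact Or.inl ⟨i, Or.inl rfl⟩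

lemma diff_mem_Broots (n : ℕ) (i j : Fin n) (h : i < j) : eps n j - eps n i ∈ Broots n := by
  exact Or.inr ⟨i, j, h, Or.inl rfl⟩

lemma sum_mem_Broots (n : ℕ) (i j : Fin n) (h : i ≠ j) : eps n j + eps n i ∈ Broots n := by
  rcases lt_or_gt_of_ne h with h' | h'
  · exact Or.inr ⟨i, j, h', Or.inr (Or.inr (Or.inl rfl))⟩
  · exact Or.inr ⟨j, i, h', Or.inr (Or.inr (Or.inl (add_comm (eps n j) (eps n i))))⟩

lemma chain (n m : ℕ) (hm : 1 ≤ m) : ∀ (k : ℕ) (i j : Fin n), (j : ℕ) = (i : ℕ) + k * m →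
    eps n j - eps n i ∈ AddSubmonoid.closure {u ∈ Broots n | htB n u = (m : ℝ)} := by
  intro k
  induction k with
  | zero =>
    intro i j h
    have : j = i := Fin.ext (by omega)
    subst this
    rw [sub_self]
    exact zero_mem _
  | succ k ih =>
    intro i j h
    have hmul : (k + 1) * m = k * m + m := by ring
    have hjn : (j : ℕ) < n := j.isLt
    have hlt : (i : ℕ) + k * m < n := by omega
    set j' : Fin n := ⟨(i : ℕ) + k * m, hlt⟩ with hj'
    have hj'v : (j' : ℕ) = (i : ℕ) + k * m := rfl
    have h1 : eps n j - eps n j' ∈ {u ∈ Broots n | htB n u = (m : ℝ)} := by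
      constructor
      · exact diff_mem_Broots n j' j (by rw [Fin.lt_def]; omega)
      · rw [htB_sub, htB_eps, htB_eps]
        have hv : (j : ℕ) = (j' : ℕ) + m := by omega
        have : ((j : ℕ) : ℝ) = ((j' : ℕ) : ℝ) + (m : ℝ) := by exact_mod_cast congrArg (Nat.cast : ℕ → ℝ) hv
        linarith
    have h2 := ih i j' hj'v
    have : eps n j - eps n i = (eps n j - eps n j') + (eps n j' - eps n i) := by abel
    rw [this]
    exact add_mem (AddSubmonoid.subset_closure h1) h2

lemma single (n m : ℕ) (hm : 1 ≤ m) (k : ℕ) (i : Fin n) (h : (i : ℕ) + 1 = k * m) :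
    eps n i ∈ AddSubmonoid.closure {u ∈ Broots n | htB n u = (m : ℝ)} := by
  have hk : 1 ≤ k := by
    by_contra hc
    have hk0 : k = 0 := by omega
    subst hk0
    simp at h
  have hmul : k * m = m + (k - 1) * m := by
    have hk1 : k = 1 + (k - 1) := by omega
    calc k * m = (1 + (k-1)) * m := by rw [← hk1]
    _ = m + (k-1) * m := by ring
  have hmm : m ≤ k * m := by
    calc m = 1 * m := (one_mul m).symm
    _ ≤ k * m := Nat.mul_le_mul_right m hk
  have hmn : m - 1 < n := by
    have := i.isLt
    omega
  set i0 : Fin n := ⟨m - 1, hmn⟩ with hi0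
  have hi0v : (i0 : ℕ) = m - 1 := rfl
  have h1 : eps n i0 ∈ {u ∈ Broots n | htB n u = (m : ℝ)} := by
    refine ⟨eps_mem_Broots n i0, ?_⟩
    rw [htB_eps]
    have hv : (i0 : ℕ) + 1 = m := by omega
    have : ((i0 : ℕ) : ℝ) + 1 = (m : ℝ) := by exact_mod_cast congrArg (Nat.cast : ℕ → ℝ) hv
    linarith
  have h2 : eps n i - eps n i0 ∈ AddSubmonoid.closure {u ∈ Broots n | htB n u = (m : ℝ)} := by
    exact chain n m hm (k - 1) i0 i (by omega)
  have : eps n i = eps n i0 + (eps n i - eps n i0) := by abel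
  rw [this]
  exact add_mem (AddSubmonoid.subset_closure h1) h2

lemma pairsum (n m : ℕ) (hm : 2 ≤ m) (hcase : Odd m ∨ 2 * n < 3 * m)
    (i j : Fin n) (hij : (i : ℕ) < (j : ℕ)) (k : ℕ)
    (h : ((i : ℕ) + 1) + ((j : ℕ) + 1) = k * m) :
    eps n j + eps n i ∈ AddSubmonoid.closure {u ∈ Broots n | htB n u = (m : ℝ)} := by
  have hm1 : 1 ≤ m := by omega
  by_cases hdvd : m ∣ ((i : ℕ) + 1)
  · -- Case A : both coordinates are multiples of m
    obtain ⟨a, ha⟩ := hdvd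
    have ha' : (i : ℕ) + 1 = a * m := by rw [ha, mul_comm]
    have hsub : (k - a) * m = k * m - a * m := Nat.sub_mul k a m
    have hb : (j : ℕ) + 1 = (k - a) * m := by omega
    exact add_mem (single n m hm1 (k - a) j hb) (single n m hm1 a i ha')
  · -- Case B
    obtain ⟨q1, r, e1, hrlt⟩ : ∃ q r, (i : ℕ) + 1 = q * m + r ∧ r < m :=
      ⟨((i : ℕ) + 1) / m, ((i : ℕ) + 1) % m,
        by rw [Nat.div_add_mod' ((i : ℕ) + 1) m], Nat.mod_lt _ (by omega)⟩
    obtain ⟨q2, s, e2, hslt⟩ : ∃ q s, (j : ℕ) + 1 = q * m + s ∧ s < m :=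
      ⟨((j : ℕ) + 1) / m, ((j : ℕ) + 1) % m,
        by rw [Nat.div_add_mod' ((j : ℕ) + 1) m], Nat.mod_lt _ (by omega)⟩
    have hr1 : 1 ≤ r := by
      rcases Nat.eq_zero_or_pos r with h0 | h0
      · exact absurd ⟨q1, by rw [mul_comm]; omega⟩ hdvd
      · exact h0
    -- r + s = m
    have e3 : (q1 + q2) * m = q1 * m + q2 * m := add_mul q1 q2 m
    have e4 : (k - (q1 + q2)) * m = k * m - (q1 + q2) * m := Nat.sub_mul k (q1 + q2) m
    have hd : (k - (q1 + q2)) * m = r + s := by omega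
    have hrs : r + s = m := by
      rcases Nat.lt_or_ge (k - (q1 + q2)) 2 with hlt2 | hge2
      · have h01 : k - (q1 + q2) = 0 ∨ k - (q1 + q2) = 1 := by omega
        rcases h01 with h0 | h0 <;> rw [h0] at hd
        · rw [zero_mul] at hd; omega
        · rw [one_mul] at hd; omega
      · have : 2 * m ≤ (k - (q1 + q2)) * m := Nat.mul_le_mul_right m hge2
        omega
    have hs1 : 1 ≤ s := by omega
    -- r ≠ s
    have rne : r ≠ s := by
      intro hreq
      have hm2 : m = 2 * r := by omega
      rcases hcase with ⟨t, ht⟩ | hlt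
      · omega
      · have hjn : (j : ℕ) < n := j.isLt
        have hq1' : q1 * m = 0 ∨ m ≤ q1 * m := by
          rcases Nat.eq_zero_or_pos q1 with h0 | h0
          · exact Or.inl (by rw [h0, zero_mul])
          · exact Or.inr (Nat.le_mul_of_pos_left m h0)
        have hq2' : q2 * m = 0 ∨ m ≤ q2 * m := by
          rcases Nat.eq_zero_or_pos q2 with h0 | h0
          · exact Or.inl (by rw [h0, zero_mul])
          · exact Or.inr (Nat.le_mul_of_pos_left m h0)
        rcases hq1' with h1 | h1 <;> rcases hq2' with h2 | h2 <;> omega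
    -- the two base indices
    have hrn : r - 1 < n := by
      have := i.isLt
      omega
    have hsn : s - 1 < n := by
      have := j.isLt
      omega
    set r' : Fin n := ⟨r - 1, hrn⟩ with hr'
    set s' : Fin n := ⟨s - 1, hsn⟩ with hs'
    have hr'v : (r' : ℕ) = r - 1 := rfl
    have hs'v : (s' : ℕ) = s - 1 := rfl
    have memS : eps n s' + eps n r' ∈ {u ∈ Broots n | htB n u = (m : ℝ)} := by
      constructor
      · exact sum_mem_Broots n r' s' (by
          intro hEq
          have : (r' : ℕ) = (s' : ℕ) := by rw [hEq]
          omega)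
      · rw [htB_add, htB_eps, htB_eps]
        have hv : ((s' : ℕ) + 1) + ((r' : ℕ) + 1) = m := by omega
        have : (((s' : ℕ) + 1 : ℕ) : ℝ) + (((r' : ℕ) + 1 : ℕ) : ℝ) = (m : ℝ) := by
          exact_mod_cast congrArg (Nat.cast : ℕ → ℝ) hv
        push_cast at this ⊢
        linarith
    have c1 : eps n i - eps n r' ∈ AddSubmonoid.closure {u ∈ Broots n | htB n u = (m : ℝ)} :=
      chain n m hm1 q1 r' i (by omega)
    have c2 : eps n j - eps n s' ∈ AddSubmonoid.closure {u ∈ Broots n | htB n u = (m : ℝ)} :=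
      chain n m hm1 q2 s' j (by omega)
    have hdecomp : eps n j + eps n i
        = (eps n s' + eps n r') + (eps n j - eps n s') + (eps n i - eps n r') := by abel
    rw [hdecomp]
    exact add_mem (add_mem (AddSubmonoid.subset_closure memS) c2) c1

lemma nat_of_eq (a m : ℕ) (l : ℤ) (hm : 0 < m) (h : (a : ℤ) = (m : ℤ) * l) :
    ∃ k : ℕ, a = k * m := by
  have hl0 : 0 ≤ l := by
    by_contra hneg
    push_neg at hneg
    have : (m : ℤ) * l < 0 := mul_neg_of_pos_of_neg (by exact_mod_cast hm) hneg
    omega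
  refine ⟨l.toNat, ?_⟩
  have hl : (l.toNat : ℤ) = l := Int.toNat_of_nonneg hl0
  have : (a : ℤ) = ((l.toNat * m : ℕ) : ℤ) := by push_cast; rw [hl, h]; ring
  exact_mod_cast this

/-- let `n ≥ 3` and `m ≥ 2` with `m` odd or `3m > 2n`. Then every
positive root of `Bₙ` whose height is divisible by `m` is a sum of roots of
height exactly `m`. -/
theorem stmt6 (n : ℕ) (hn : 3 ≤ n) (m : ℕ) (hm : 2 ≤ m)
    (hcase : Odd m ∨ 2 * n < 3 * m) :
    ∀ v ∈ Broots n, 0 < htB n v → (∃ l : ℤ, htB n v = (m : ℝ) * l) →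
      v ∈ AddSubmonoid.closure {u ∈ Broots n | htB n u = (m : ℝ)} := by
  intro v hv hpos hdvd
  obtain ⟨l, hl⟩ := hdvd
  have hm0 : 0 < m := by omega
  rcases hv with ⟨i, hi | hi⟩ | ⟨i, j, hij, (hv | hv | hv | hv)⟩
  · subst hi
    rw [htB_eps] at hl
    have hz : (((i : ℕ) + 1 : ℕ) : ℤ) = (m : ℤ) * l := by exact_mod_cast hl
    obtain ⟨k, hk⟩ := nat_of_eq _ m l hm0 hz
    exact single n m (by omega) k i hk
  · subst hi
    rw [htB_neg, htB_eps] at hpos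
    have : (0 : ℝ) ≤ ((i : ℕ) : ℝ) := Nat.cast_nonneg _
    linarith
  · subst hv
    rw [htB_sub, htB_eps, htB_eps] at hl
    have hijn : (i : ℕ) < (j : ℕ) := hij
    have hz : (((j : ℕ) - (i : ℕ) : ℕ) : ℤ) = (m : ℤ) * l := by
      have hl2 : ((j : ℕ) : ℝ) - ((i : ℕ) : ℝ) = (m : ℝ) * l := by linarith
      have : ((j : ℕ) : ℤ) - ((i : ℕ) : ℤ) = (m : ℤ) * l := by exact_mod_cast hl2
      omega
    obtain ⟨k, hk⟩ := nat_of_eq _ m l hm0 hz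
    exact chain n m (by omega) k i j (by omega)
  · subst hv
    rw [htB_neg, htB_sub, htB_eps, htB_eps] at hpos
    have hijn : (i : ℕ) < (j : ℕ) := hij
    have : ((i : ℕ) : ℝ) < ((j : ℕ) : ℝ) := by exact_mod_cast hijn
    linarith
  · subst hv
    rw [htB_add, htB_eps, htB_eps] at hl
    have hz : ((((i : ℕ) + 1) + ((j : ℕ) + 1) : ℕ) : ℤ) = (m : ℤ) * l := by
      have hl2 : (((i : ℕ) : ℝ) + 1) + (((j : ℕ) : ℝ) + 1) = (m : ℝ) * l := by linarith
      exact_mod_cast hl2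
    obtain ⟨k, hk⟩ := nat_of_eq _ m l hm0 hz
    exact pairsum n m hm hcase i j hij k hk
  · subst hv
    rw [htB_neg, htB_add, htB_eps, htB_eps] at hpos
    have h1 : (0 : ℝ) ≤ ((i : ℕ) : ℝ) := Nat.cast_nonneg _
    have h2 : (0 : ℝ) ≤ ((j : ℕ) : ℝ) := Nat.cast_nonneg _
    linarith
end
end

section
/- In E6, the vector γ_4 = α_2 + α_3 + α_4 + α_5 (coefficient vector (0,1,1,1,1,0)) is a root of height 4 which is not the sum of two roots of height 2, and it satisfies γ_4ᵀ A c = 0 for every root c of height 2. Moreover, the number of positive roots of E6 of even height is 16, and every positive root of even height can be written as a sum of elements of R_2 ∪ {γ_4}. -/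
open Matrix

/-- The Cartan matrix of type `E₆` in Bourbaki numbering (index `i : Fin 6` is node `i+1`):
the chain is `1 - 3 - 4 - 5 - 6` and node `2` is joined to node `4`. -/
def cartanE6 : Matrix (Fin 6) (Fin 6) ℤ :=
  !![ 2,  0, -1,  0,  0,  0;
      0,  2,  0, -1,  0,  0;
     -1,  0,  2, -1,  0,  0;
      0, -1, -1,  2, -1,  0;
      0,  0,  0, -1,  2, -1;
      0,  0,  0,  0, -1,  2]

/-- The roots of `E₆`, identified with their coefficient vectors `c` with respect to the
simple roots: `R = {c ∈ ℤ^6 : cᵀ A c = 2}`. -/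
def rootsE6 : Set (Fin 6 → ℤ) := {c | c ⬝ᵥ cartanE6.mulVec c = 2}

/-- The height of a coefficient vector. -/
def htE6 (c : Fin 6 → ℤ) : ℤ := ∑ i, c i

/-- `γ₄ = α₂ + α₃ + α₄ + α₅`, coefficient vector `(0,1,1,1,1,0)`. -/
def γ₄ : Fin 6 → ℤ := ![0, 1, 1, 1, 1, 0]

private lemma cons_val_five' {α : Type*} (x : α) (u : Fin 5 → α) : vecCons x u 5 = u 4 := rfl

/-- The quadratic form of `E₆`, expanded. -/
private lemma quadForm (c : Fin 6 → ℤ) :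
    c ⬝ᵥ cartanE6.mulVec c =
    2*(c 0)^2+2*(c 1)^2+2*(c 2)^2+2*(c 3)^2+2*(c 4)^2+2*(c 5)^2
      -2*(c 0)*(c 2)-2*(c 1)*(c 3)-2*(c 2)*(c 3)-2*(c 3)*(c 4)-2*(c 4)*(c 5) := by
  simp [cartanE6, dotProduct, mulVec, Fin.sum_univ_six, Matrix.cons_val_zero,
    Matrix.cons_val_one, Matrix.cons_val_two, Matrix.cons_val_three, Matrix.cons_val_four,
    cons_val_five', Matrix.vecHead, Matrix.vecTail]
  ring

private lemma intBound1 (x : ℤ) (h : 3*x^2 ≤ 8) : -1 ≤ x ∧ x ≤ 1 := by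
  constructor <;> nlinarith [sq_nonneg (x+2), sq_nonneg (x-2)]

private lemma intBound2 (x : ℤ) (h : 3*x^2 ≤ 20) : -2 ≤ x ∧ x ≤ 2 := by
  constructor <;> nlinarith [sq_nonneg (x+3), sq_nonneg (x-3)]

private lemma intBound3 (x : ℤ) (h : x^2 ≤ 12) : -3 ≤ x ∧ x ≤ 3 := by
  constructor <;> nlinarith [sq_nonneg (x+4), sq_nonneg (x-4)]


private def rootList : List (Fin 6 → ℤ) := [
  ![-1,-2,-2,-3,-2,-1],
  ![-1,-1,-2,-3,-2,-1],
  ![-1,-1,-2,-2,-2,-1],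
  ![-1,-1,-2,-2,-1,-1],
  ![-1,-1,-2,-2,-1,0],
  ![-1,-1,-1,-2,-2,-1],
  ![-1,-1,-1,-2,-1,-1],
  ![-1,-1,-1,-2,-1,0],
  ![-1,-1,-1,-1,-1,-1],
  ![-1,-1,-1,-1,-1,0],
  ![-1,-1,-1,-1,0,0],
  ![-1,0,-1,-1,-1,-1],
  ![-1,0,-1,-1,-1,0],
  ![-1,0,-1,-1,0,0],
  ![-1,0,-1,0,0,0],
  ![-1,0,0,0,0,0],
  ![0,-1,-1,-2,-2,-1],
  ![0,-1,-1,-2,-1,-1],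
  ![0,-1,-1,-2,-1,0],
  ![0,-1,-1,-1,-1,-1],
  ![0,-1,-1,-1,-1,0],
  ![0,-1,-1,-1,0,0],
  ![0,-1,0,-1,-1,-1],
  ![0,-1,0,-1,-1,0],
  ![0,-1,0,-1,0,0],
  ![0,-1,0,0,0,0],
  ![0,0,-1,-1,-1,-1],
  ![0,0,-1,-1,-1,0],
  ![0,0,-1,-1,0,0],
  ![0,0,-1,0,0,0],
  ![0,0,0,-1,-1,-1],
  ![0,0,0,-1,-1,0],
  ![0,0,0,-1,0,0],
  ![0,0,0,0,-1,-1],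
  ![0,0,0,0,-1,0],
  ![0,0,0,0,0,-1],
  ![0,0,0,0,0,1],
  ![0,0,0,0,1,0],
  ![0,0,0,0,1,1],
  ![0,0,0,1,0,0],
  ![0,0,0,1,1,0],
  ![0,0,0,1,1,1],
  ![0,0,1,0,0,0],
  ![0,0,1,1,0,0],
  ![0,0,1,1,1,0],
  ![0,0,1,1,1,1],
  ![0,1,0,0,0,0],
  ![0,1,0,1,0,0],
  ![0,1,0,1,1,0],
  ![0,1,0,1,1,1],
  ![0,1,1,1,0,0],
  ![0,1,1,1,1,0],
  ![0,1,1,1,1,1],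
  ![0,1,1,2,1,0],
  ![0,1,1,2,1,1],
  ![0,1,1,2,2,1],
  ![1,0,0,0,0,0],
  ![1,0,1,0,0,0],
  ![1,0,1,1,0,0],
  ![1,0,1,1,1,0],
  ![1,0,1,1,1,1],
  ![1,1,1,1,0,0],
  ![1,1,1,1,1,0],
  ![1,1,1,1,1,1],
  ![1,1,1,2,1,0],
  ![1,1,1,2,1,1],
  ![1,1,1,2,2,1],
  ![1,1,2,2,1,0],
  ![1,1,2,2,1,1],
  ![1,1,2,2,2,1],
  ![1,1,2,3,2,1],
  ![1,2,2,3,2,1]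
]

private def evenList : List (Fin 6 → ℤ) := [
  ![0,0,0,0,1,1],
  ![0,0,0,1,1,0],
  ![0,0,1,1,0,0],
  ![0,0,1,1,1,1],
  ![0,1,0,1,0,0],
  ![0,1,0,1,1,1],
  ![0,1,1,1,1,0],
  ![0,1,1,2,1,1],
  ![1,0,1,0,0,0],
  ![1,0,1,1,1,0],
  ![1,1,1,1,0,0],
  ![1,1,1,1,1,1],
  ![1,1,1,2,1,0],
  ![1,1,1,2,2,1],
  ![1,1,2,2,1,1],
  ![1,1,2,3,2,1]
]

set_option maxHeartbeats 1000000 in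
private lemma enumE6 : ∀ x0 ∈ Finset.Icc (-1:ℤ) 1, ∀ x1 ∈ Finset.Icc (-2:ℤ) 2,
    ∀ x2 ∈ Finset.Icc (-2:ℤ) 2, ∀ x3 ∈ Finset.Icc (-3:ℤ) 3,
    ∀ x4 ∈ Finset.Icc (-2:ℤ) 2, ∀ x5 ∈ Finset.Icc (-1:ℤ) 1,
    2*x0^2+2*x1^2+2*x2^2+2*x3^2+2*x4^2+2*x5^2
      -2*x0*x2-2*x1*x3-2*x2*x3-2*x3*x4-2*x4*x5 = 2 →
    ![x0,x1,x2,x3,x4,x5] ∈ rootList := by decide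

private lemma eta6 (c : Fin 6 → ℤ) : c = ![c 0, c 1, c 2, c 3, c 4, c 5] := by
  funext i; fin_cases i <;> rfl

/-- Every root lies in the explicit list of 72 roots. -/
private lemma roots_mem_list : ∀ c ∈ rootsE6, c ∈ rootList := by
  intro c hc
  have hQ : c ⬝ᵥ cartanE6.mulVec c = 2 := hc
  rw [quadForm c] at hQ
  obtain ⟨x0, x1, x2, x3, x4, x5, hx0, hx1, hx2, hx3, hx4, hx5⟩ :
      ∃ x0 x1 x2 x3 x4 x5 : ℤ, c 0 = x0 ∧ c 1 = x1 ∧ c 2 = x2 ∧ c 3 = x3 ∧ c 4 = x4 ∧ c 5 = x5 :=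
    ⟨_, _, _, _, _, _, rfl, rfl, rfl, rfl, rfl, rfl⟩
  rw [hx0, hx1, hx2, hx3, hx4, hx5] at hQ
  have b0 := intBound1 x0 (by nlinarith [sq_nonneg (2*x1-x3), sq_nonneg (x0-2*x2+x3), sq_nonneg (x0-2*x3+2*x4), sq_nonneg (x0-2*x4+2*x5), sq_nonneg (x0-2*x5)])
  have b1 : -2 ≤ x1 ∧ x1 ≤ 2 := by
    have h : x1^2 ≤ 4 := by nlinarith [sq_nonneg (2*x0-x2), sq_nonneg (3*x2-2*x3), sq_nonneg (3*x1-4*x3+3*x4), sq_nonneg (3*x1-5*x4+4*x5), sq_nonneg (x1-2*x5)]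
    exact intBound2 x1 (by linarith)
  have b2 := intBound2 x2 (by nlinarith [sq_nonneg (2*x0-x2), sq_nonneg (2*x1-x3), sq_nonneg (2*x2-3*x3+2*x4), sq_nonneg (2*x2-4*x4+3*x5), sq_nonneg (2*x2-5*x5)])
  have b3 := intBound3 x3 (by nlinarith [sq_nonneg (2*x0-x2), sq_nonneg (2*x1-x3), sq_nonneg (3*x2-2*x3), sq_nonneg (x3-2*x4+x5), sq_nonneg (x3-3*x5)])
  have b4 := intBound2 x4 (by nlinarith [sq_nonneg (2*x0-x2), sq_nonneg (2*x1-x3), sq_nonneg (3*x2-2*x3), sq_nonneg (5*x3-6*x4), sq_nonneg (x4-2*x5)])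
  have b5 := intBound1 x5 (by nlinarith [sq_nonneg (2*x0-x2), sq_nonneg (2*x1-x3), sq_nonneg (3*x2-2*x3), sq_nonneg (5*x3-6*x4), sq_nonneg (4*x4-5*x5)])
  have := enumE6 x0 (Finset.mem_Icc.2 ⟨b0.1, b0.2⟩) x1 (Finset.mem_Icc.2 ⟨b1.1, b1.2⟩)
    x2 (Finset.mem_Icc.2 ⟨b2.1, b2.2⟩) x3 (Finset.mem_Icc.2 ⟨b3.1, b3.2⟩)
    x4 (Finset.mem_Icc.2 ⟨b4.1, b4.2⟩) x5 (Finset.mem_Icc.2 ⟨b5.1, b5.2⟩) hQ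
  rw [eta6 c, hx0, hx1, hx2, hx3, hx4, hx5]
  exact this

set_option maxRecDepth 10000 in
set_option maxHeartbeats 1000000 in
private lemma list_facts3 : ∀ a ∈ rootList, ∀ b ∈ rootList,
    htE6 a = 2 → htE6 b = 2 → a + b ≠ γ₄ := by decide

set_option maxRecDepth 10000 in
set_option maxHeartbeats 1000000 in
private lemma list_facts4 : ∀ c ∈ rootList, htE6 c = 2 →
    γ₄ ⬝ᵥ cartanE6.mulVec c = 0 := by decide

set_option maxRecDepth 10000 in
set_option maxHeartbeats 1000000 in
private lemma list_facts5 : ∀ c ∈ rootList, (∀ i, 0 ≤ c i) → 2 ∣ htE6 c →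
    c ∈ evenList := by decide

set_option maxRecDepth 10000 in
set_option maxHeartbeats 1000000 in
private lemma even_facts : ∀ c ∈ evenList,
    c ⬝ᵥ cartanE6.mulVec c = 2 ∧ (∀ i, 0 ≤ c i) ∧ 2 ∣ htE6 c := by decide

section
private def SE6 : Set (Fin 6 → ℤ) := {a ∈ rootsE6 | htE6 a = 2} ∪ {γ₄}

private lemma gen0 : (![0,0,0,0,1,1] : Fin 6 → ℤ) ∈ AddSubmonoid.closure SE6 :=
  AddSubmonoid.subset_closure (Or.inl ⟨show _ ⬝ᵥ cartanE6.mulVec _ = 2 by decide, by decide⟩)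

private lemma gen1 : (![0,0,0,1,1,0] : Fin 6 → ℤ) ∈ AddSubmonoid.closure SE6 :=
  AddSubmonoid.subset_closure (Or.inl ⟨show _ ⬝ᵥ cartanE6.mulVec _ = 2 by decide, by decide⟩)

private lemma gen2 : (![0,0,1,1,0,0] : Fin 6 → ℤ) ∈ AddSubmonoid.closure SE6 :=
  AddSubmonoid.subset_closure (Or.inl ⟨show _ ⬝ᵥ cartanE6.mulVec _ = 2 by decide, by decide⟩)

private lemma gen3 : (![0,1,0,1,0,0] : Fin 6 → ℤ) ∈ AddSubmonoid.closure SE6 :=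
  AddSubmonoid.subset_closure (Or.inl ⟨show _ ⬝ᵥ cartanE6.mulVec _ = 2 by decide, by decide⟩)

private lemma gen4 : (![1,0,1,0,0,0] : Fin 6 → ℤ) ∈ AddSubmonoid.closure SE6 :=
  AddSubmonoid.subset_closure (Or.inl ⟨show _ ⬝ᵥ cartanE6.mulVec _ = 2 by decide, by decide⟩)

private lemma genG : γ₄ ∈ AddSubmonoid.closure SE6 :=
  AddSubmonoid.subset_closure (Or.inr rfl)

private lemma even_closure : ∀ c ∈ evenList, c ∈ AddSubmonoid.closure SE6 := by
  intro c hc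
  simp only [evenList, List.mem_cons, List.not_mem_nil, or_false] at hc
  rcases hc with rfl|rfl|rfl|rfl|rfl|rfl|rfl|rfl|rfl|rfl|rfl|rfl|rfl|rfl|rfl|rfl
  · exact gen0
  · exact gen1
  · exact gen2
  · have h : (![0,0,1,1,1,1] : Fin 6 → ℤ) = ![0,0,0,0,1,1] + ![0,0,1,1,0,0] := by decide
    rw [h]; exact (AddSubmonoid.add_mem _ gen0 gen2)
  · exact gen3
  · have h : (![0,1,0,1,1,1] : Fin 6 → ℤ) = ![0,0,0,0,1,1] + ![0,1,0,1,0,0] := by decide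
    rw [h]; exact (AddSubmonoid.add_mem _ gen0 gen3)
  · exact genG
  · have h : (![0,1,1,2,1,1] : Fin 6 → ℤ) = ![0,0,0,0,1,1] + ![0,0,1,1,0,0] + ![0,1,0,1,0,0] := by decide
    rw [h]; exact (AddSubmonoid.add_mem _ (AddSubmonoid.add_mem _ gen0 gen2) gen3)
  · exact gen4
  · have h : (![1,0,1,1,1,0] : Fin 6 → ℤ) = ![0,0,0,1,1,0] + ![1,0,1,0,0,0] := by decide
    rw [h]; exact (AddSubmonoid.add_mem _ gen1 gen4)
  · have h : (![1,1,1,1,0,0] : Fin 6 → ℤ) = ![0,1,0,1,0,0] + ![1,0,1,0,0,0] := by decide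
    rw [h]; exact (AddSubmonoid.add_mem _ gen3 gen4)
  · have h : (![1,1,1,1,1,1] : Fin 6 → ℤ) = ![0,0,0,0,1,1] + ![0,1,0,1,0,0] + ![1,0,1,0,0,0] := by decide
    rw [h]; exact (AddSubmonoid.add_mem _ (AddSubmonoid.add_mem _ gen0 gen3) gen4)
  · have h : (![1,1,1,2,1,0] : Fin 6 → ℤ) = ![0,0,0,1,1,0] + ![0,1,0,1,0,0] + ![1,0,1,0,0,0] := by decide
    rw [h]; exact (AddSubmonoid.add_mem _ (AddSubmonoid.add_mem _ gen1 gen3) gen4)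
  · have h : (![1,1,1,2,2,1] : Fin 6 → ℤ) = ![0,0,0,0,1,1] + ![0,0,0,1,1,0] + ![0,1,0,1,0,0] + ![1,0,1,0,0,0] := by decide
    rw [h]; exact (AddSubmonoid.add_mem _ (AddSubmonoid.add_mem _ (AddSubmonoid.add_mem _ gen0 gen1) gen3) gen4)
  · have h : (![1,1,2,2,1,1] : Fin 6 → ℤ) = ![0,0,0,0,1,1] + ![0,0,1,1,0,0] + ![0,1,0,1,0,0] + ![1,0,1,0,0,0] := by decide
    rw [h]; exact (AddSubmonoid.add_mem _ (AddSubmonoid.add_mem _ (AddSubmonoid.add_mem _ gen0 gen2) gen3) gen4)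
  · have h : (![1,1,2,3,2,1] : Fin 6 → ℤ) = ![0,0,0,0,1,1] + ![0,0,0,1,1,0] + ![0,0,1,1,0,0] + ![0,1,0,1,0,0] + ![1,0,1,0,0,0] := by decide
    rw [h]; exact (AddSubmonoid.add_mem _ (AddSubmonoid.add_mem _ (AddSubmonoid.add_mem _ (AddSubmonoid.add_mem _ gen0 gen1) gen2) gen3) gen4)

end

/-- in `E₆`, `γ₄` is a root of height `4`, not the sum of two roots of
height `2`, satisfying `γ₄ᵀ A c = 0` for every root `c` of height `2`; the number of
positive roots of even height is `16`, and every positive root of even height is a sum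
of elements of `R₂ ∪ {γ₄}`. -/
theorem stmt11 :
    γ₄ ∈ rootsE6 ∧ htE6 γ₄ = 4 ∧
    (¬ ∃ a b : Fin 6 → ℤ, a ∈ rootsE6 ∧ htE6 a = 2 ∧ b ∈ rootsE6 ∧ htE6 b = 2 ∧
        γ₄ = a + b) ∧
    (∀ c ∈ rootsE6, htE6 c = 2 → γ₄ ⬝ᵥ cartanE6.mulVec c = 0) ∧
    {c ∈ rootsE6 | (∀ i, 0 ≤ c i) ∧ 2 ∣ htE6 c}.ncard = 16 ∧
    (∀ c ∈ rootsE6, (∀ i, 0 ≤ c i) → 2 ∣ htE6 c →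
      c ∈ AddSubmonoid.closure ({a ∈ rootsE6 | htE6 a = 2} ∪ {γ₄})) := by
  refine ⟨show _ ⬝ᵥ cartanE6.mulVec _ = 2 by decide, by decide, ?_, ?_, ?_, ?_⟩
  · rintro ⟨a, b, ha, hta, hb, htb, heq⟩
    exact list_facts3 a (roots_mem_list a ha) b (roots_mem_list b hb) hta htb heq.symm
  · intro c hc h2
    exact list_facts4 c (roots_mem_list c hc) h2
  · have hset : {c ∈ rootsE6 | (∀ i, 0 ≤ c i) ∧ 2 ∣ htE6 c} = ↑evenList.toFinset := by
      ext c
      constructor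
      · rintro ⟨hc, hpos, hdvd⟩
        simpa using list_facts5 c (roots_mem_list c hc) hpos hdvd
      · intro hc
        have hc' : c ∈ evenList := by simpa using hc
        obtain ⟨h1, h2, h3⟩ := even_facts c hc'
        exact ⟨h1, h2, h3⟩
    rw [hset, Set.ncard_coe_finset]
    decide
  · intro c hc hpos hdvd
    exact even_closure c (list_facts5 c (roots_mem_list c hc) hpos hdvd)
end
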